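/- Let N : ℕ and ρ : Fin N → ℂ with ρ ≠ 0 and ξ(ρ) < 1. Then P_h is Fréchet differentiable over ℝ at ρ, and its derivative L is self-adjoint with respect to the real inner product: Re⟪L(u), v⟫ = Re⟪L(v), u⟫ for all u, v : Fin N → ℂ. (Toy-model form of Proposition 3, item 1: for f = h the full Jacobian matrix ((Π,π),(π̄,Π̄)) is Hermitian, i.e. the holomorphic block is Hermitian and the antiholomorphic block is symmetric, which is equivalent to symmetry of the real bilinear form (u,v) ↦ Re⟪L(u), v⟫.) -/

import Mathlib

noncomputable section

open scoped BigOperators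

namespace PureSpinorToy

variable {N : ℕ}

/-- Complex bilinear pairing `B(ρ,σ) = ∑ I, ρ_I σ_I`. -/
def B (ρ σ : Fin N → ℂ) : ℂ := ∑ I, ρ I * σ I

/-- Hermitian inner product `⟪ρ,σ⟫ = ∑ I, conj(ρ_I) σ_I`. -/
def hInner (ρ σ : Fin N → ℂ) : ℂ := ∑ I, (starRingEnd ℂ) (ρ I) * σ I

/-- Norm square `‖ρ‖² = ⟪ρ,ρ⟫` (a nonnegative real). -/
def nsq (ρ : Fin N → ℂ) : ℝ := (hInner ρ ρ).re

/-- Componentwise complex conjugation `ρ̄`. -/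
def conjFun (ρ : Fin N → ℂ) : Fin N → ℂ := fun I => (starRingEnd ℂ) (ρ I)

/-- `ζ(ρ) = B(ρ,ρ)/‖ρ‖²`. -/
def zeta (ρ : Fin N → ℂ) : ℂ := B ρ ρ / (nsq ρ : ℂ)

/-- `ξ(ρ) = |ζ(ρ)|²`. -/
def xi (ρ : Fin N → ℂ) : ℝ := Complex.normSq (zeta ρ)

/-- The family of projection maps
`P_f(ρ) = f(ξ(ρ)) • (ρ − (ζ(ρ)/(1+√(1−ξ(ρ)))) • ρ̄)`. -/
def P (f : ℝ → ℂ) (ρ : Fin N → ℂ) : Fin N → ℂ :=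
  f (xi ρ) • (ρ - (zeta ρ / (1 + (Real.sqrt (1 - xi ρ) : ℂ))) • conjFun ρ)

/-- The special function `h(t) = (1+√(1−t))/(2√(1−t))`. -/
def h (t : ℝ) : ℂ := (((1 + Real.sqrt (1 - t)) / (2 * Real.sqrt (1 - t)) : ℝ) : ℂ)

/-- The potential `Φ(ρ) = (‖ρ‖²/2)(1+√(1−ξ(ρ)))`. -/
def Phi (ρ : Fin N → ℂ) : ℝ := (nsq ρ / 2) * (1 + Real.sqrt (1 - xi ρ))

open scoped Topology

/- ### auxiliary lemmas -/

lemma hInner_conj_symm (w u : Fin N → ℂ) : (starRingEnd ℂ) (hInner w u) = hInner u w := by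
  simp [hInner, map_sum, mul_comm]

lemma hInner_smul_left (a : ℂ) (w u : Fin N → ℂ) :
    hInner (a • w) u = (starRingEnd ℂ) a * hInner w u := by
  simp [hInner, Finset.mul_sum, mul_assoc]

lemma hInner_sub_left (w w' u : Fin N → ℂ) :
    hInner (w - w') u = hInner w u - hInner w' u := by
  simp [hInner, sub_mul, Finset.sum_sub_distrib]

lemma hInner_conjFun_left (σ u : Fin N → ℂ) : hInner (conjFun σ) u = B σ u := by
  simp [hInner, conjFun, B]

lemma B_comm (u σ : Fin N → ℂ) : B u σ = B σ u := by
  simp [B, mul_comm]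

lemma nsq_eq (σ : Fin N → ℂ) : nsq σ = ∑ I, Complex.normSq (σ I) := by
  simp only [nsq, hInner, Complex.re_sum]
  refine Finset.sum_congr rfl fun I _ => ?_
  rw [mul_comm, Complex.mul_conj, Complex.ofReal_re]

lemma nsq_pos {ρ : Fin N → ℂ} (hρ : ρ ≠ 0) : 0 < nsq ρ := by
  rw [nsq_eq]
  rcases Function.ne_iff.1 hρ with ⟨I, hI⟩
  exact Finset.sum_pos' (fun i _ => Complex.normSq_nonneg _)
    ⟨I, Finset.mem_univ I, by simpa [Complex.normSq_pos] using hI⟩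

/- ### continuous linear maps -/

/-- `u ↦ ⟪w,u⟫` as an `ℝ`-linear map. -/
def hInnerL (w : Fin N → ℂ) : (Fin N → ℂ) →ₗ[ℝ] ℂ where
  toFun u := hInner w u
  map_add' u v := by simp [hInner, mul_add, Finset.sum_add_distrib]
  map_smul' r u := by
    simp only [hInner, Pi.smul_apply, RingHom.id_apply]
    rw [Finset.smul_sum]
    exact Finset.sum_congr rfl fun I _ => mul_smul_comm r _ _

def hInnerCLM (w : Fin N → ℂ) : (Fin N → ℂ) →L[ℝ] ℂ :=
  LinearMap.toContinuousLinearMap (hInnerL w)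

@[simp] lemma hInnerCLM_apply (w u : Fin N → ℂ) : hInnerCLM w u = hInner w u := rfl

def hBL : (Fin N → ℂ) →ₗ[ℝ] ((Fin N → ℂ) →L[ℝ] ℂ) where
  toFun := hInnerCLM
  map_add' w w' := ContinuousLinearMap.ext fun u => by
    simp [hInner, add_mul, Finset.sum_add_distrib]
  map_smul' r w := ContinuousLinearMap.ext fun u => by
    simp only [hInnerCLM_apply, RingHom.id_apply, ContinuousLinearMap.coe_smul',
      Pi.smul_apply]
    simp [hInner, Complex.real_smul, map_mul, Complex.conj_ofReal, Finset.mul_sum, mul_assoc]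

/-- The hermitian pairing as a continuous `ℝ`-bilinear map. -/
def hB : (Fin N → ℂ) →L[ℝ] (Fin N → ℂ) →L[ℝ] ℂ :=
  LinearMap.toContinuousLinearMap hBL

@[simp] lemma hB_apply (w u : Fin N → ℂ) : hB w u = hInner w u := rfl

/-- componentwise conjugation as a continuous `ℝ`-linear map. -/
def conjCLM : (Fin N → ℂ) →L[ℝ] (Fin N → ℂ) :=
  ContinuousLinearMap.pi fun I =>
    Complex.conjCLE.toContinuousLinearMap.comp (ContinuousLinearMap.proj I)

@[simp] lemma conjCLM_apply (σ : Fin N → ℂ) : conjCLM σ = conjFun σ := rfl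

/-- `w ↦ (u ↦ Re ⟪w,u⟫)` as a continuous bilinear map. -/
def innerT : (Fin N → ℂ) →L[ℝ] (Fin N → ℂ) →L[ℝ] ℝ :=
  (ContinuousLinearMap.compL ℝ (Fin N → ℂ) ℂ ℝ Complex.reCLM).comp hB

@[simp] lemma innerT_apply (w u : Fin N → ℂ) : innerT w u = (hInner w u).re := rfl


/- ### derivatives -/

lemma normSq_eq_re (z : ℂ) : Complex.normSq z = ((starRingEnd ℂ) z * z).re := by
  rw [mul_comm, Complex.mul_conj, Complex.ofReal_re]

lemma hasFDerivAt_nsq (σ : Fin N → ℂ) :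
    HasFDerivAt (nsq (N := N)) ((2:ℝ) • innerT σ) σ := by
  have h1 := hB.isBoundedBilinearMap.hasFDerivAt (σ, σ)
  have h2 : HasFDerivAt (fun τ : Fin N → ℂ => (τ, τ))
      (((ContinuousLinearMap.id ℝ (Fin N → ℂ)).prod (ContinuousLinearMap.id ℝ _))) σ :=
    (hasFDerivAt_id σ).prodMk (hasFDerivAt_id σ)
  have h3 := HasFDerivAt.comp (f := fun τ : Fin N → ℂ => (τ, τ)) σ h1 h2
  have h4 := Complex.reCLM.hasFDerivAt.comp σ h3
  have h5 : HasFDerivAt (nsq (N := N))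
      (Complex.reCLM.comp ((hB.isBoundedBilinearMap.deriv (σ, σ)).comp
        ((ContinuousLinearMap.id ℝ (Fin N → ℂ)).prod (ContinuousLinearMap.id ℝ _)))) σ := h4
  convert h5 using 1
  ext u
  have : hInner u σ = (starRingEnd ℂ) (hInner σ u) := (hInner_conj_symm σ u).symm
  simp [IsBoundedBilinearMap.deriv_apply, this, Complex.add_re, two_mul]

lemma hasFDerivAt_Bdiag (σ : Fin N → ℂ) :
    HasFDerivAt (fun τ : Fin N → ℂ => B τ τ) ((2:ℝ) • hB (conjFun σ)) σ := by
  have h1 := hB.isBoundedBilinearMap.hasFDerivAt (conjFun σ, σ)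
  have h2 : HasFDerivAt (fun τ : Fin N → ℂ => (conjFun τ, τ))
      ((conjCLM).prod (ContinuousLinearMap.id ℝ _)) σ :=
    (conjCLM.hasFDerivAt).prodMk (hasFDerivAt_id σ)
  have h3 := HasFDerivAt.comp (f := fun τ : Fin N → ℂ => (conjFun τ, τ)) σ h1 h2
  have h4 : HasFDerivAt (fun τ : Fin N → ℂ => B τ τ)
      ((hB.isBoundedBilinearMap.deriv (conjFun σ, σ)).comp
        ((conjCLM).prod (ContinuousLinearMap.id ℝ _))) σ :=
    h3.congr_of_eventuallyEq
      (Filter.Eventually.of_forall fun τ => (hInner_conjFun_left τ τ).symm)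
  convert h4 using 1
  ext u
  simp [IsBoundedBilinearMap.deriv_apply, hInner_conjFun_left, B_comm, two_smul]

/-- derivative of `zeta`. -/
def Dz (σ : Fin N → ℂ) : (Fin N → ℂ) →L[ℝ] ℂ :=
  (nsq σ)⁻¹ • ((2:ℝ) • hB (conjFun σ)) +
    ((-((nsq σ) ^ 2)⁻¹ : ℝ) • ((2:ℝ) • innerT σ)).smulRight (B σ σ)

lemma hasFDerivAt_zeta (σ : Fin N → ℂ) (hn : nsq σ ≠ 0) :
    HasFDerivAt (zeta (N := N)) (Dz σ) σ := by
  have hinv : HasFDerivAt (fun τ : Fin N → ℂ => (nsq τ)⁻¹)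
      ((-((nsq σ) ^ 2)⁻¹ : ℝ) • ((2:ℝ) • innerT σ)) σ :=
    (hasDerivAt_inv hn).comp_hasFDerivAt σ (hasFDerivAt_nsq σ)
  have hz := hinv.smul (hasFDerivAt_Bdiag σ)
  exact hz.congr_of_eventuallyEq (Filter.Eventually.of_forall fun τ => by
    show zeta τ = (nsq τ)⁻¹ • B τ τ
    rw [zeta, Complex.real_smul, Complex.ofReal_inv, inv_mul_eq_div])

/-- derivative of `xi`. -/
def Dxi (σ : Fin N → ℂ) : (Fin N → ℂ) →L[ℝ] ℝ :=
  Complex.reCLM.comp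
    (((starRingEnd ℂ) (zeta σ)) • Dz σ +
      (zeta σ) • (Complex.conjCLE.toContinuousLinearMap.comp (Dz σ)))

lemma hasFDerivAt_xi (σ : Fin N → ℂ) (hn : nsq σ ≠ 0) :
    HasFDerivAt (xi (N := N)) (Dxi σ) σ := by
  have hz := hasFDerivAt_zeta σ hn
  have hconj : HasFDerivAt (fun τ : Fin N → ℂ => (starRingEnd ℂ) (zeta τ))
      (Complex.conjCLE.toContinuousLinearMap.comp (Dz σ)) σ :=
    (Complex.conjCLE.toContinuousLinearMap.hasFDerivAt).comp σ hz
  have hmul := hconj.mul hz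
  have h4 := Complex.reCLM.hasFDerivAt.comp σ hmul
  exact h4.congr_of_eventuallyEq (Filter.Eventually.of_forall fun τ => by
    show xi τ = ((starRingEnd ℂ) (zeta τ) * zeta τ).re
    rw [xi, normSq_eq_re])

/-- derivative of `√(1−ξ)`. -/
def Dsq (σ : Fin N → ℂ) : (Fin N → ℂ) →L[ℝ] ℝ :=
  (1 / (2 * Real.sqrt (1 - xi σ))) • ((0 : (Fin N → ℂ) →L[ℝ] ℝ) - Dxi σ)

lemma hasFDerivAt_sqrt_xi (σ : Fin N → ℂ) (hn : nsq σ ≠ 0) (hx : xi σ < 1) :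
    HasFDerivAt (fun τ : Fin N → ℂ => Real.sqrt (1 - xi τ)) (Dsq σ) σ := by
  have h1 : HasFDerivAt (fun τ : Fin N → ℂ => 1 - xi τ)
      ((0 : (Fin N → ℂ) →L[ℝ] ℝ) - Dxi σ) σ :=
    (hasFDerivAt_const (1:ℝ) σ).sub (hasFDerivAt_xi σ hn)
  exact (Real.hasDerivAt_sqrt (by linarith)).comp_hasFDerivAt σ h1


lemma Dz_apply (σ u : Fin N → ℂ) :
    Dz σ u = (nsq σ)⁻¹ • (2 * B σ u) +
      (-((nsq σ) ^ 2)⁻¹ * (2 * (hInner σ u).re)) • B σ σ := by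
  simp [Dz, hInner_conjFun_left, two_smul, two_mul, smul_smul]
  ring

lemma Dxi_apply (σ u : Fin N → ℂ) :
    Dxi σ u = 2 * ((starRingEnd ℂ) (zeta σ) * Dz σ u).re := by
  have : zeta σ * (starRingEnd ℂ) (Dz σ u)
      = (starRingEnd ℂ) ((starRingEnd ℂ) (zeta σ) * Dz σ u) := by
    rw [map_mul, Complex.conj_conj]
  simp only [Dxi, ContinuousLinearMap.coe_comp', Function.comp_apply,
    ContinuousLinearMap.add_apply, ContinuousLinearMap.smul_apply, smul_eq_mul,
    Complex.reCLM_apply, ContinuousLinearEquiv.coe_coe, Complex.conjCLE_apply, this,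
    Complex.add_re, Complex.conj_re]
  ring

lemma Dsq_apply (σ u : Fin N → ℂ) :
    Dsq σ u = 1 / (2 * Real.sqrt (1 - xi σ)) * (-(Dxi σ u)) := by
  simp [Dsq]

lemma B_self_eq (σ : Fin N → ℂ) (hn : nsq σ ≠ 0) :
    B σ σ = zeta σ * (nsq σ : ℂ) := by
  rw [zeta, div_mul_cancel₀]
  exact_mod_cast hn

lemma re_conj_Dz (σ u : Fin N → ℂ) (hn : nsq σ ≠ 0) :
    ((starRingEnd ℂ) (zeta σ) * Dz σ u).re
      = (nsq σ)⁻¹ * (2 * ((starRingEnd ℂ) (zeta σ) * B σ u).re)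
        + (-((nsq σ) ^ 2)⁻¹ * (2 * (hInner σ u).re)) * (xi σ * nsq σ) := by
  rw [Dz_apply, B_self_eq σ hn]
  have h1 : (starRingEnd ℂ) (zeta σ) * (zeta σ * (nsq σ : ℂ))
      = ((xi σ * nsq σ : ℝ) : ℂ) := by
    rw [← mul_assoc, mul_comm ((starRingEnd ℂ) (zeta σ)) (zeta σ), Complex.mul_conj]
    push_cast [xi]
    ring
  rw [mul_add, mul_smul_comm, mul_smul_comm, h1]
  simp [Complex.add_re, Complex.real_smul, Complex.re_ofReal_mul, Complex.ofReal_re,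
    ← Complex.ofReal_pow]
  left
  ring

lemma hasFDerivAt_Phi (σ : Fin N → ℂ) (hn : nsq σ ≠ 0) (hx : xi σ < 1) :
    HasFDerivAt (Phi (N := N)) ((2:ℝ) • innerT (P h σ)) σ := by
  have hN2 : HasFDerivAt (fun τ : Fin N → ℂ => nsq τ / 2)
      ((2:ℝ)⁻¹ • ((2:ℝ) • innerT σ)) σ := by
    simpa only [div_eq_inv_mul] using (hasFDerivAt_nsq σ).const_mul (2⁻¹ : ℝ)
  have hd : HasFDerivAt (fun τ : Fin N → ℂ => 1 + Real.sqrt (1 - xi τ))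
      ((0 : (Fin N → ℂ) →L[ℝ] ℝ) + Dsq σ) σ :=
    (hasFDerivAt_const (1:ℝ) σ).add (hasFDerivAt_sqrt_xi σ hn hx)
  have hphi := hN2.mul hd
  have hPhi' : HasFDerivAt (Phi (N := N))
      ((nsq σ / 2) • ((0 : (Fin N → ℂ) →L[ℝ] ℝ) + Dsq σ) +
        (1 + Real.sqrt (1 - xi σ)) • ((2:ℝ)⁻¹ • ((2:ℝ) • innerT σ))) σ := hphi
  convert hPhi' using 1
  ext u
  simp only [ContinuousLinearMap.add_apply, ContinuousLinearMap.smul_apply,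
    ContinuousLinearMap.coe_smul', Pi.smul_apply, ContinuousLinearMap.zero_apply,
    innerT_apply, smul_eq_mul, zero_add]
  rw [Dsq_apply, Dxi_apply, re_conj_Dz σ u hn]
  set s := Real.sqrt (1 - xi σ) with hs_def
  set n := nsq σ with hn_def
  set rp := (hInner σ u).re with hrp_def
  set c := ((starRingEnd ℂ) (zeta σ) * B σ u).re with hc_def
  have hspos : 0 < s := Real.sqrt_pos.2 (by linarith)
  have hs2 : s ^ 2 = 1 - xi σ := Real.sq_sqrt (by linarith)
  have hxi_eq : xi σ = 1 - s ^ 2 := by linarith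
  have hlhs : (hInner (P h σ) u).re = (1 + s) / (2 * s) * rp - 1 / (2 * s) * c := by
    have h1s : (1 : ℂ) + (s : ℂ) = ((1 + s : ℝ) : ℂ) := by push_cast; ring
    rw [P, hInner_smul_left, hInner_sub_left, hInner_smul_left, hInner_conjFun_left]
    rw [h, ← hs_def, map_div₀, h1s, Complex.conj_ofReal, Complex.conj_ofReal]
    rw [div_mul_eq_mul_div, Complex.re_ofReal_mul, Complex.sub_re, Complex.div_ofReal_re]
    rw [hrp_def, hc_def]
    field_simp
  rw [hlhs, hxi_eq]
  field_simp
  ring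


lemma differentiableAt_P (σ : Fin N → ℂ) (hn : nsq σ ≠ 0) (hx : xi σ < 1) :
    DifferentiableAt ℝ (P (N := N) h) σ := by
  have hspos : 0 < Real.sqrt (1 - xi σ) := Real.sqrt_pos.2 (by linarith)
  have dz : DifferentiableAt ℝ (zeta (N := N)) σ := (hasFDerivAt_zeta σ hn).differentiableAt
  have dsq : DifferentiableAt ℝ (fun τ : Fin N → ℂ => Real.sqrt (1 - xi τ)) σ :=
    (hasFDerivAt_sqrt_xi σ hn hx).differentiableAt
  have dreal : DifferentiableAt ℝ
      (fun τ : Fin N → ℂ => (1 + Real.sqrt (1 - xi τ)) / (2 * Real.sqrt (1 - xi τ))) σ := by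
    have hden : (2 : ℝ) * Real.sqrt (1 - xi σ) ≠ 0 := by positivity
    simp only [div_eq_mul_inv]
    exact ((differentiableAt_const (1:ℝ)).add dsq).mul
      (((differentiableAt_const (2:ℝ)).mul dsq).inv hden)
  have dh : DifferentiableAt ℝ (fun τ : Fin N → ℂ => h (xi τ)) σ :=
    Complex.ofRealCLM.differentiableAt.comp σ dreal
  have dc : DifferentiableAt ℝ
      (fun τ : Fin N → ℂ => zeta τ / (1 + (Real.sqrt (1 - xi τ) : ℂ))) σ := by
    have hden : (1 : ℂ) + (Real.sqrt (1 - xi σ) : ℂ) ≠ 0 := by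
      have h0 : (0:ℝ) < 1 + Real.sqrt (1 - xi σ) := by positivity
      have : ((1 + Real.sqrt (1 - xi σ) : ℝ) : ℂ) ≠ 0 := by
        exact_mod_cast Complex.ofReal_ne_zero.2 (ne_of_gt h0)
      simpa using this
    simp only [div_eq_mul_inv]
    refine dz.mul (DifferentiableAt.inv ?_ hden)
    exact (differentiableAt_const (1:ℂ)).add (Complex.ofRealCLM.differentiableAt.comp σ dsq)
  exact dh.smul (differentiableAt_id.sub (dc.smul conjCLM.differentiableAt))

/-- Toy model, Proposition 3 item 1: for `f = h`, the (real) Fréchet derivative of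
`P_h` at `ρ` is self-adjoint with respect to the real inner product `Re⟪·,·⟫`. -/
theorem statement19 {N : ℕ} (ρ : Fin N → ℂ) (hρ : ρ ≠ 0) (hξ : xi ρ < 1) :
    DifferentiableAt ℝ (P h) ρ ∧
      ∀ u v, (hInner (fderiv ℝ (P h) ρ u) v).re
        = (hInner (fderiv ℝ (P h) ρ v) u).re := by
  have hn : 0 < nsq ρ := nsq_pos hρ
  have hD : DifferentiableAt ℝ (P h) ρ := differentiableAt_P ρ hn.ne' hξ
  refine ⟨hD, ?_⟩
  have hF : HasFDerivAt (P h) (fderiv ℝ (P h) ρ) ρ := hD.hasFDerivAt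
  set f' : (Fin N → ℂ) → (Fin N → ℂ) →L[ℝ] ℝ :=
    fun τ => (2:ℝ) • innerT (P h τ) with hf'_def
  have hev : ∀ᶠ σ in 𝓝 ρ, HasFDerivAt (Phi (N := N)) (f' σ) σ := by
    have hc1 : ContinuousAt (nsq (N := N)) ρ :=
      (hasFDerivAt_nsq ρ).differentiableAt.continuousAt
    have hc2 : ContinuousAt (xi (N := N)) ρ :=
      (hasFDerivAt_xi ρ hn.ne').differentiableAt.continuousAt
    have e1 := hc1.eventually_mem (isOpen_Ioi.mem_nhds hn)
    have e2 := hc2.eventually_mem (isOpen_Iio.mem_nhds hξ)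
    filter_upwards [e1, e2] with σ h1 h2
    exact hasFDerivAt_Phi σ (ne_of_gt h1) h2
  have hf'' : HasFDerivAt f' (((2:ℝ) • innerT).comp (fderiv ℝ (P h) ρ)) ρ :=
    (((2:ℝ) • innerT).hasFDerivAt).comp ρ hF
  intro u v
  have hsym := second_derivative_symmetric_of_eventually hev hf'' u v
  simp only [ContinuousLinearMap.coe_comp', Function.comp_apply,
    ContinuousLinearMap.smul_apply, innerT_apply, smul_eq_mul] at hsym
  linarith


end PureSpinorToy
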